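/- Let K₀ ⊆ K be a field extension, f = (f₁,…,fₙ) an n-tuple of polynomials in K₀[x₁,…,xₙ], J the determinant of the Jacobian matrix (∂fᵢ/∂xⱼ), and α ∈ Kⁿ a point with f(α) = 0 and J(α) ≠ 0. Then every coordinate of α is algebraic over K₀. -/

import Mathlib

open MvPolynomial

/-- Chain rule for derivations applied to multivariate polynomial evaluation. -/
theorem derivation_aeval_chain {R A M : Type*} [CommRing R] [CommRing A] [Algebra R A]
    [AddCommGroup M] [Module A M] [Module R M] [IsScalarTower R A M]
    {n : ℕ} (D : Derivation R A M) (α : Fin n → A) (p : MvPolynomial (Fin n) R) :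
    D (aeval α p) = ∑ j, aeval α (pderiv j p) • D (α j) := by
  induction p using MvPolynomial.induction_on with
  | C a => simp
  | add p q hp hq =>
      simp only [map_add, hp, hq, ← Finset.sum_add_distrib, add_smul]
  | mul_X p i hp =>
      have key : ∀ j, aeval α (pderiv j (p * X i)) =
          aeval α (pderiv j p) * α i + (if j = i then aeval α p else 0) := by
        intro j
        rcases eq_or_ne j i with rfl | h
        · simp [pderiv_X_self, mul_comm, add_comm]
        · simp [pderiv_X_of_ne h.symm, h, mul_comm]
      simp only [key, add_smul, Finset.sum_add_distrib, ite_smul, zero_smul]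
      rw [Finset.sum_ite_eq' Finset.univ i (fun j => aeval α p • D (α j))]
      simp only [Finset.mem_univ, if_true, map_mul, aeval_X, Derivation.leibniz, hp,
        Finset.smul_sum, smul_smul, mul_comm (α i)]
      abel

/-- If a square matrix over a field has nonzero determinant and annihilates a vector of module
elements, that vector is zero. -/
theorem vec_eq_zero_of_det_ne_zero {L M : Type*} [Field L] [AddCommGroup M] [Module L M]
    {n : ℕ} (A : Matrix (Fin n) (Fin n) L) (hA : A.det ≠ 0) (v : Fin n → M)
    (hv : ∀ i, ∑ j, A i j • v j = 0) (k : Fin n) : v k = 0 := by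
  have h1 : A⁻¹ * A = 1 := Matrix.nonsing_inv_mul A (isUnit_iff_ne_zero.2 hA)
  have : v k = ∑ i, A⁻¹ k i • ∑ j, A i j • v j := by
    simp_rw [Finset.smul_sum, smul_smul]
    rw [Finset.sum_comm]
    have h2 : ∀ j, ∑ i, (A⁻¹ k i * A i j) • v j = ((A⁻¹ * A) k j) • v j := by
      intro j; rw [← Finset.sum_smul, Matrix.mul_apply]
    simp_rw [h2, h1, Matrix.one_apply, ite_smul, one_smul, zero_smul]
    rw [Finset.sum_ite_eq Finset.univ k v]
    simp
  simp only [hv, smul_zero, Finset.sum_const_zero] at this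
  exact this

universe u

set_option maxHeartbeats 2000000 in
theorem algebraicity_criterion_aux {k K : Type u} [Field k] [Field K] [Algebra k K]
    {n : ℕ} (g : Fin n → MvPolynomial (Fin n) k) (α : Fin n → K)
    (hzero : ∀ i, aeval α (g i) = 0)
    (hJac : aeval α (Matrix.det (Matrix.of fun i j => pderiv j (g i))) ≠ 0) :
    ∀ i, IsAlgebraic k (α i) := by
  set L := IntermediateField.adjoin k (Set.range α) with hLdef
  have hmem : ∀ j, α j ∈ L := fun j => IntermediateField.subset_adjoin _ _ ⟨j, rfl⟩
  set β : Fin n → L := fun j => ⟨α j, hmem j⟩ with hβdef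
  have hinj : Function.Injective (algebraMap (↥L) K) := (algebraMap (↥L) K).injective
  have hβ : ∀ p : MvPolynomial (Fin n) k, algebraMap (↥L) K (aeval β p) = aeval α p := by
    intro p
    rw [← MvPolynomial.aeval_algebraMap_apply]
    rfl
  have hgβ : ∀ i, aeval β (g i) = 0 := fun i => hinj (by rw [hβ, hzero i, map_zero])
  set A : Matrix (Fin n) (Fin n) (↥L) := Matrix.of (fun i j => aeval β (pderiv j (g i))) with hA
  have hdet : A.det ≠ 0 := by
    intro h
    apply hJac
    have h2 : aeval α (Matrix.det (Matrix.of fun i j => pderiv j (g i)))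
        = algebraMap (↥L) K A.det := by
      rw [AlgHom.map_det (aeval α), RingHom.map_det]
      congr 1
      ext i j
      simp only [AlgHom.mapMatrix_apply, Matrix.map_apply, RingHom.mapMatrix_apply, hA,
        Matrix.of_apply, hβ]
    rw [h2, h, map_zero]
  set D := KaehlerDifferential.D k (↥L) with hD
  have hDβ : ∀ j, D (β j) = 0 := by
    refine vec_eq_zero_of_det_ne_zero A hdet _ (fun i => ?_)
    have hc := derivation_aeval_chain D β (g i)
    rw [hgβ i, map_zero] at hc
    exact hc.symm
  have hDaeval : ∀ p : MvPolynomial (Fin n) k, D (aeval β p) = 0 := by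
    intro p
    rw [derivation_aeval_chain D β p]
    simp [hDβ]
  have hDall : ∀ x : (↥L), D x = 0 := by
    intro x
    obtain ⟨r, s, hx⟩ := (IntermediateField.mem_adjoin_range_iff k α (x : K)).1 x.2
    have hxL : x = aeval β r / aeval β s := by
      apply hinj
      rw [map_div₀, hβ, hβ]; exact_mod_cast hx
    rw [hxL, Derivation.leibniz_div, hDaeval, hDaeval]
    simp
  haveI hFU : Algebra.FormallyUnramified k (↥L) := by
    constructor
    have hbot : ∀ z : Ω[(↥L)⁄k], z = 0 := by
      intro z
      have hz : z ∈ Submodule.span (↥L) (Set.range (KaehlerDifferential.D k (↥L))) := by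
        rw [KaehlerDifferential.span_range_derivation]; trivial
      rw [Submodule.span_eq_bot.2 (by rintro _ ⟨x, rfl⟩; exact hDall x)] at hz
      exact hz
    exact subsingleton_of_forall_eq 0 fun z => hbot z
  haveI hEFT : Algebra.EssFiniteType k (↥L) := by
    rw [Algebra.essFiniteType_iff_exists_subalgebra]
    refine ⟨Algebra.adjoin k (Set.range β), nonZeroDivisors _, ?_, ?_⟩
    · constructor
      rw [← Algebra.adjoin_adjoin_coe_preimage (R := k) (s := Set.range β)]
      have hfin : (((↑) : Algebra.adjoin k (Set.range β) → ↥L) ⁻¹' (Set.range β)).Finite :=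
        (Set.finite_range β).preimage (Subtype.val_injective.injOn)
      rw [← hfin.coe_toFinset]
      exact Subalgebra.fg_adjoin_finset _
    · refine { map_units := ?_, surj := ?_, exists_of_eq := ?_ }
      · rintro ⟨y, hy⟩
        simp only [Subalgebra.algebraMap_eq, Algebra.algebraMap_self, RingHom.id_comp]
        rw [isUnit_iff_ne_zero]
        intro h0
        exact nonZeroDivisors.ne_zero hy (Subtype.ext (by simpa using h0))
      · intro z
        rcases eq_or_ne z 0 with rfl | hz
        · exact ⟨⟨0, ⟨1, one_mem _⟩⟩, by simp⟩
        obtain ⟨r, s, hx⟩ := (IntermediateField.mem_adjoin_range_iff k α (z : K)).1 z.2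
        have hsK : aeval α s ≠ 0 := by
          intro h0
          apply hz
          have hzz : (z : K) = 0 := by rw [hx, h0, div_zero]
          exact_mod_cast hzz
        have hs : aeval β s ≠ 0 := fun h0 => hsK (by rw [← hβ s, h0, map_zero])
        have hmemr : aeval β r ∈ Algebra.adjoin k (Set.range β) := by
          rw [Algebra.adjoin_range_eq_range_aeval]
          exact ⟨r, rfl⟩
        have hmems : aeval β s ∈ Algebra.adjoin k (Set.range β) := by
          rw [Algebra.adjoin_range_eq_range_aeval]
          exact ⟨s, rfl⟩
        refine ⟨⟨⟨aeval β r, hmemr⟩, ⟨⟨aeval β s, hmems⟩,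
          mem_nonZeroDivisors_of_ne_zero (fun h0 => hs (by
            simpa using congrArg Subtype.val h0))⟩⟩, ?_⟩
        simp only [Subalgebra.algebraMap_eq, Algebra.algebraMap_self, RingHom.id_comp,
          Subalgebra.coe_val]
        apply hinj
        show (algebraMap (↥L) K) (z * aeval β s) = (algebraMap (↥L) K) (aeval β r)
        rw [map_mul, hβ s, hβ r]
        have : (algebraMap (↥L) K) z = (aeval α) r / (aeval α) s := hx
        rw [this, div_mul_cancel₀ _ hsK]
      · intro x y h
        simp only [Subalgebra.algebraMap_eq, Algebra.algebraMap_self, RingHom.id_comp] at h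
        obtain rfl : x = y := Subtype.ext (by simpa using h)
        exact ⟨1, rfl⟩
  haveI : Algebra.IsSeparable k (↥L) := Algebra.FormallyUnramified.isSeparable k (↥L)
  haveI : Algebra.IsAlgebraic k (↥L) := Algebra.IsSeparable.isAlgebraic k (↥L)
  intro i
  have halgβ : IsAlgebraic k (β i) := Algebra.IsAlgebraic.isAlgebraic (β i)
  have : α i = algebraMap (↥L) K (β i) := rfl
  rw [this]
  exact (isAlgebraic_algebraMap_iff hinj).2 halgβ

/-- if `f : (Fin n) → K₀[x₁,…,xₙ]` vanishes at `α ∈ Kⁿ` while the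
Jacobian determinant does not, then every coordinate of `α` is algebraic over `K₀`. -/
theorem algebraicity_criterion {K₀ K : Type*} [Field K₀] [Field K] [Algebra K₀ K]
    {n : ℕ} (f : Fin n → MvPolynomial (Fin n) K₀) (α : Fin n → K)
    (hzero : ∀ i, MvPolynomial.aeval α (f i) = 0)
    (hJac : MvPolynomial.aeval α
      (Matrix.det (Matrix.of fun i j => MvPolynomial.pderiv j (f i))) ≠ 0) :
    ∀ i, IsAlgebraic K₀ (α i) := by
  set F := (⊥ : IntermediateField K₀ K) with hF
  set g : Fin n → MvPolynomial (Fin n) ↥F :=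
    fun i => MvPolynomial.map (algebraMap K₀ ↥F) (f i) with hg
  have hmap : ∀ p : MvPolynomial (Fin n) K₀,
      aeval α (MvPolynomial.map (algebraMap K₀ ↥F) p) = aeval α p :=
    fun p => MvPolynomial.aeval_map_algebraMap (A := ↥F) α p
  have hg0 : ∀ i, aeval α (g i) = 0 := fun i => by rw [hg]; rw [hmap]; exact hzero i
  have hgJ : aeval α (Matrix.det (Matrix.of fun i j => pderiv j (g i))) ≠ 0 := by
    have hM : (Matrix.of fun i j => pderiv j (g i)) =
        (Matrix.of fun i j => pderiv j (f i)).map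
          (MvPolynomial.map (algebraMap K₀ ↥F)) := by
      ext i j
      simp only [Matrix.map_apply, Matrix.of_apply, hg, pderiv_map]
    rw [hM, ← RingHom.mapMatrix_apply, ← RingHom.map_det, hmap]
    exact hJac
  intro i
  have halg : IsAlgebraic (↥F) (α i) := algebraicity_criterion_aux g α hg0 hgJ i
  obtain ⟨p, hp0, hpz⟩ := halg
  have hcomp : (algebraMap K₀ K).comp
      ((IntermediateField.botEquiv K₀ K : ↥F →ₐ[K₀] K₀) : ↥F →+* K₀) = algebraMap (↥F) K := by
    ext y
    obtain ⟨c, hc⟩ := IntermediateField.mem_bot.1 y.2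
    have hy : y = algebraMap K₀ ↥F c := by
      apply (algebraMap (↥F) K).injective
      rw [← IsScalarTower.algebraMap_apply K₀ (↥F) K c, hc]
      rfl
    rw [hy]
    simp only [RingHom.coe_comp, Function.comp_apply, AlgHom.coe_ringHom_mk]
    rw [show ((IntermediateField.botEquiv K₀ K : ↥F →ₐ[K₀] K₀) : ↥F →+* K₀)
        (algebraMap K₀ ↥F c) = c from IntermediateField.botEquiv_def c]
    exact (IsScalarTower.algebraMap_apply K₀ (↥F) K c).symm
  refine ⟨p.map ((IntermediateField.botEquiv K₀ K : ↥F →ₐ[K₀] K₀) : ↥F →+* K₀), ?_, ?_⟩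
  · exact Polynomial.map_ne_zero hp0
  · rw [Polynomial.aeval_def, Polynomial.eval₂_map, hcomp]
    exact hpz
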